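/- Let d ≥ 2. Define u* ∈ [0,1]^d by u*_j = (d−1)/(d+1) for 1 ≤ j ≤ (d+1)/2, u*_j = d/(d+1) if j = d/2 + 1 and d is even, and u*_j = 1 otherwise. Define C* : [0,1]^d → ℝ by C*(u) = Σ_{j=0}^{d−1} min_{k=0}^{d−1} ( u_{((j+k) mod d)+1} − Σ_{i=1, i∉I(j,k)}^{d} (1 − u*_i) )^+, where I(j,k) = { ((j+l) mod d) + 1 : l = 0,1,…,k } and x^+ = max{x,0}. Let π ∈ S_d be the order-reversing permutation π(k) = d − k + 1. Then C*(u*) = 0 and C*(u*_π) = (d−1)/(d+1). -/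

import Mathlib

set_option linter.unnecessarySeqFocus false



/-- The extremal point `u*`: `u*_j = (d-1)/(d+1)` for `1 ≤ j ≤ (d+1)/2`,
`u*_j = d/(d+1)` if `j = d/2 + 1` and `d` is even, and `u*_j = 1` otherwise
(0-indexed here). -/
noncomputable def uStar (d : ℕ) : Fin d → ℝ := fun i =>
  if 2 * ((i : ℕ) + 1) ≤ d + 1 then ((d : ℝ) - 1) / ((d : ℝ) + 1)
  else if d % 2 = 0 ∧ (i : ℕ) = d / 2 then (d : ℝ) / ((d : ℝ) + 1)
  else 1

/-- The index set `I(j,k) = {((j+l) mod d) + 1 : l = 0,…,k}` (0-indexed here). -/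
def Iset (d : ℕ) (hd : 0 < d) (j k : ℕ) : Finset (Fin d) :=
  (Finset.range (k + 1)).image fun l => (⟨(j + l) % d, Nat.mod_lt _ hd⟩ : Fin d)

/-- The extremal function
`C*(u) = Σ_{j=0}^{d−1} min_{k=0}^{d−1} ( u_{((j+k) mod d)+1} − Σ_{i∉I(j,k)} (1 − u*_i) )^+`
(0-indexed here). -/
noncomputable def CStar (d : ℕ) (hd : 0 < d) (u : Fin d → ℝ) : ℝ :=
  ∑ j ∈ Finset.range d,
    (Finset.Icc 0 (d - 1)).inf' (Finset.nonempty_Icc.mpr (Nat.zero_le _))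
      fun k =>
        max (u ⟨(j + k) % d, Nat.mod_lt _ hd⟩ -
          ∑ i ∈ Finset.univ \ Iset d hd j k, (1 - uStar d i)) 0

lemma one_sub_uStar (d : ℕ) (i : Fin d) :
    1 - uStar d i = if 2 * ((i:ℕ)+1) ≤ d + 1 then 2/((d:ℝ)+1)
      else if d % 2 = 0 ∧ (i:ℕ) = d/2 then 1/((d:ℝ)+1) else 0 := by
  have h : ((d:ℝ)+1) ≠ 0 := by positivity
  unfold uStar; split_ifs <;> field_simp <;> ring

lemma one_sub_uStar_nonneg (d : ℕ) (i : Fin d) : 0 ≤ 1 - uStar d i := by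
  rw [one_sub_uStar]; split_ifs <;> positivity

lemma uStar_ge (d : ℕ) (i : Fin d) : ((d:ℝ)-1)/((d:ℝ)+1) ≤ uStar d i := by
  have h : (0:ℝ) < (d:ℝ)+1 := by positivity
  unfold uStar; split_ifs
  · exact le_refl _
  · gcongr; linarith
  · rw [div_le_one h]; linarith

lemma sum_two_ites (d m : ℕ) (hm : m ≤ d) (a b : ℝ) (mid : ℕ) (hmid : d % 2 = 0 → mid < d) :
    ∑ n ∈ Finset.range d, ((if n < m then a else 0) + (if d % 2 = 0 ∧ n = mid then b else 0))
      = m * a + (if d % 2 = 0 then b else 0) := by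
  rw [Finset.sum_add_distrib]
  congr 1
  · rw [← Finset.sum_filter]
    have h : (Finset.range d).filter (fun n => n < m) = Finset.range m := by
      ext n; simp; omega
    rw [h, Finset.sum_const, Finset.card_range, nsmul_eq_mul]
  · by_cases hpar : d % 2 = 0
    · simp only [hpar, true_and, if_true]
      rw [Finset.sum_ite_eq' (Finset.range d) mid (fun _ => b)]
      simp [hmid hpar]
    · simp [hpar]

lemma sum_one_sub (d : ℕ) (hd : 1 ≤ d) : ∑ i : Fin d, (1 - uStar d i) = 1 := by
  have h0 : ((d:ℝ)+1) ≠ 0 := by positivity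
  have step : ∀ i : Fin d,
      (1 - uStar d i) = (fun n => (if n < (d+1)/2 then 2/((d:ℝ)+1) else 0)
        + (if d % 2 = 0 ∧ n = d/2 then 1/((d:ℝ)+1) else 0)) (i : ℕ) := by
    intro i
    rw [one_sub_uStar]
    by_cases h1 : 2*((i:ℕ)+1) ≤ d+1
    · rw [if_pos h1]
      simp only
      rw [if_pos (show (i:ℕ) < (d+1)/2 by omega), if_neg (show ¬(d % 2 = 0 ∧ (i:ℕ) = d/2) by omega), add_zero]
    · rw [if_neg h1]
      simp only
      rw [if_neg (show ¬(i:ℕ) < (d+1)/2 by omega), zero_add]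
  rw [Finset.sum_congr rfl (fun i _ => step i),
    Fin.sum_univ_eq_sum_range (fun n => (if n < (d+1)/2 then 2/((d:ℝ)+1) else 0)
        + (if d % 2 = 0 ∧ n = d/2 then 1/((d:ℝ)+1) else 0)) d,
    sum_two_ites d ((d+1)/2) (by omega) _ _ (d/2) (by omega)]
  by_cases hpar : d % 2 = 0
  · have h2 : 2 * ((d+1)/2) = d := by omega
    have h2' : 2 * (((d+1)/2 : ℕ) : ℝ) = d := by exact_mod_cast congrArg Nat.cast h2
    simp only [hpar, if_true]
    field_simp
    linarith
  · have h2 : 2 * ((d+1)/2) = d + 1 := by omega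
    have h2' : 2 * (((d+1)/2 : ℕ) : ℝ) = (d:ℝ) + 1 := by exact_mod_cast congrArg Nat.cast h2
    simp only [hpar, if_false]
    field_simp
    linarith

lemma max_uStar_eq (d : ℕ) (hd : 2 ≤ d) (n : ℕ) (hn : n < d) :
    max (uStar d (Fin.rev ⟨n, hn⟩) - uStar d ⟨n, hn⟩) 0
      = (if n < (d+1)/2 - 1 then 2/((d:ℝ)+1) else 0)
        + (if d % 2 = 0 ∧ n = d/2 - 1 then 1/((d:ℝ)+1) else 0) := by
  have h0 : (0:ℝ) < (d:ℝ)+1 := by positivity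
  have e1 : 1 - ((d:ℝ)-1)/((d:ℝ)+1) = 2/((d:ℝ)+1) := by field_simp; ring
  have e2 : (d:ℝ)/((d:ℝ)+1) - ((d:ℝ)-1)/((d:ℝ)+1) = 1/((d:ℝ)+1) := by field_simp; ring
  have e3 : ((d:ℝ)-1)/((d:ℝ)+1) ≤ 1 := by rw [div_le_one h0]; linarith
  have e4 : ((d:ℝ)-1)/((d:ℝ)+1) ≤ (d:ℝ)/((d:ℝ)+1) := by gcongr <;> linarith
  have e5 : (d:ℝ)/((d:ℝ)+1) ≤ 1 := by rw [div_le_one h0]; linarith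
  simp only [uStar, Fin.val_rev]
  split_ifs <;>
    first
      | (exfalso; omega)
      | (rw [e1, max_eq_left (by positivity)]; ring)
      | (rw [e2, max_eq_left (by positivity)]; ring)
      | (rw [max_eq_right (by linarith)]; ring)

lemma key (d : ℕ) (hd : 2 ≤ d) (j : ℕ) (hj : j < d) :
    uStar d (Fin.rev ⟨j, hj⟩) ≤ ((d:ℝ)-1)/((d:ℝ)+1)
      + (1 - uStar d ⟨(j+1) % d, Nat.mod_lt _ (by omega)⟩) := by
  have h0 : (0:ℝ) < (d:ℝ)+1 := by positivity
  have e1 : 1 - ((d:ℝ)-1)/((d:ℝ)+1) = 2/((d:ℝ)+1) := by field_simp; ring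
  have e2 : 1 - (d:ℝ)/((d:ℝ)+1) = 1/((d:ℝ)+1) := by field_simp; ring
  have e3 : (0:ℝ) ≤ 1/((d:ℝ)+1) := by positivity
  have e4 : (2:ℝ)/((d:ℝ)+1) = 2 * (1/((d:ℝ)+1)) := by ring
  by_cases hjd : j + 1 = d
  · have hm : (j+1) % d = 0 := by rw [hjd, Nat.mod_self]
    simp only [uStar, Fin.val_rev, hm]
    split_ifs <;> first | (exfalso; omega) | linarith
  · have hm : (j+1) % d = j+1 := Nat.mod_eq_of_lt (by omega)
    simp only [uStar, Fin.val_rev, hm]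
    split_ifs <;> first | (exfalso; omega) | linarith

lemma Iset_zero (d : ℕ) (hd : 0 < d) (j : ℕ) :
    Iset d hd j 0 = {⟨j % d, Nat.mod_lt _ hd⟩} := by
  unfold Iset
  rw [Finset.range_one, Finset.image_singleton]
  simp

lemma pair_subset (d : ℕ) (hd : 0 < d) (j k : ℕ) (hk : 1 ≤ k) :
    ({⟨j % d, Nat.mod_lt _ hd⟩, ⟨(j+1) % d, Nat.mod_lt _ hd⟩} : Finset (Fin d)) ⊆ Iset d hd j k := by
  intro x hx
  rw [Finset.mem_insert, Finset.mem_singleton] at hx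
  unfold Iset
  rw [Finset.mem_image]
  rcases hx with h | h
  · exact ⟨0, by simp, by rw [h]; exact Fin.ext (by simp)⟩
  · exact ⟨1, by rw [Finset.mem_range]; omega, by rw [h]⟩

lemma pair_ne (d : ℕ) (hd : 2 ≤ d) (j : ℕ) (hj : j < d) :
    (⟨j % d, Nat.mod_lt _ (by omega)⟩ : Fin d) ≠ ⟨(j+1) % d, Nat.mod_lt _ (by omega)⟩ := by
  apply Fin.ne_of_val_ne
  simp only
  rw [Nat.mod_eq_of_lt hj]
  by_cases hjd : j + 1 = d
  · rw [hjd, Nat.mod_self]; omega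
  · rw [Nat.mod_eq_of_lt (by omega)]; omega

/-- At `u*` the function `C*` takes the value `0`, while at `u*` permuted by the
order-reversing permutation `π(k) = d − k + 1` it takes the value `(d−1)/(d+1)`. -/
theorem CStar_values (d : ℕ) (hd : 2 ≤ d) :
    CStar d (by omega) (uStar d) = 0 ∧
    CStar d (by omega) (uStar d ∘ Fin.rev) = ((d : ℝ) - 1) / ((d : ℝ) + 1) := by

  have hd0 : 0 < d := by omega
  have h0m : (0:ℕ) ∈ Finset.Icc 0 (d-1) := by simp
  constructor
  · unfold CStar
    apply Finset.sum_eq_zero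
    intro j hj
    rw [Finset.mem_range] at hj
    apply le_antisymm
    · refine le_trans (Finset.inf'_le _ h0m) ?_
      rw [Iset_zero, Finset.sum_sdiff_eq_sub (Finset.subset_univ _),
        sum_one_sub d (by omega), Finset.sum_singleton]
      simp only [Nat.add_zero, Nat.mod_eq_of_lt hj, sub_sub_cancel]
      simp
    · apply Finset.le_inf'
      intro k _
      exact le_max_right _ _
  · unfold CStar
    have step : ∀ j ∈ Finset.range d,
        ((Finset.Icc 0 (d - 1)).inf' (Finset.nonempty_Icc.mpr (Nat.zero_le _))
          fun k => max ((uStar d ∘ Fin.rev) ⟨(j + k) % d, Nat.mod_lt _ (by omega)⟩ -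
            ∑ i ∈ Finset.univ \ Iset d (by omega) j k, (1 - uStar d i)) 0)
        = (if j < (d+1)/2 - 1 then 2/((d:ℝ)+1) else 0)
          + (if d % 2 = 0 ∧ j = d/2 - 1 then 1/((d:ℝ)+1) else 0) := by
      intro j hj
      rw [Finset.mem_range] at hj
      rw [← max_uStar_eq d hd j hj]
      apply le_antisymm
      · refine le_trans (Finset.inf'_le _ h0m) (le_of_eq ?_)
        rw [Iset_zero, Finset.sum_sdiff_eq_sub (Finset.subset_univ _),
          sum_one_sub d (by omega), Finset.sum_singleton]
        simp only [Nat.add_zero, Nat.mod_eq_of_lt hj, sub_sub_cancel, Function.comp_apply]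
      · apply Finset.le_inf'
        intro k hk
        rw [Finset.mem_Icc] at hk
        by_cases hk0 : k = 0
        · subst hk0
          refine le_of_eq ?_
          rw [Iset_zero, Finset.sum_sdiff_eq_sub (Finset.subset_univ _),
            sum_one_sub d (by omega), Finset.sum_singleton]
          simp only [Nat.add_zero, Nat.mod_eq_of_lt hj, sub_sub_cancel, Function.comp_apply]
        · have hk1 : 1 ≤ k := by omega
          rw [Finset.sum_sdiff_eq_sub (Finset.subset_univ _), sum_one_sub d (by omega)]
          apply max_le_max _ le_rfl
          have hsub : ∑ i ∈ ({⟨j % d, Nat.mod_lt _ hd0⟩, ⟨(j+1) % d, Nat.mod_lt _ hd0⟩} :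
                Finset (Fin d)), (1 - uStar d i)
              ≤ ∑ i ∈ Iset d (by omega) j k, (1 - uStar d i) :=
            Finset.sum_le_sum_of_subset_of_nonneg (pair_subset d hd0 j k hk1)
              (fun i _ _ => one_sub_uStar_nonneg d i)
          rw [Finset.sum_pair (pair_ne d hd j hj)] at hsub
          simp only [Nat.mod_eq_of_lt hj] at hsub
          have hkey := key d hd j hj
          have hge := uStar_ge d (Fin.rev (⟨(j+k) % d, Nat.mod_lt _ hd0⟩ : Fin d))
          simp only [Function.comp_apply]
          linarith
    rw [Finset.sum_congr rfl step,
      sum_two_ites d ((d+1)/2 - 1) (by omega) _ _ (d/2 - 1) (by omega)]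
    have h0 : ((d:ℝ)+1) ≠ 0 := by positivity
    by_cases hpar : d % 2 = 0
    · have h2 : 2 * ((d+1)/2 - 1) = d - 2 := by omega
      have h2' : 2 * ((((d+1)/2 - 1 : ℕ)) : ℝ) = (d:ℝ) - 2 := by
        have h3 : ((2 * ((d+1)/2 - 1) : ℕ) : ℝ) = ((d - 2 : ℕ) : ℝ) := congrArg (Nat.cast (R := ℝ)) h2
        rw [Nat.cast_mul, Nat.cast_sub (show 2 ≤ d by omega)] at h3
        push_cast at h3
        linarith
      simp only [hpar, if_true]
      field_simp
      linarith
    · have h2 : 2 * ((d+1)/2 - 1) = d - 1 := by omega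
      have h2' : 2 * ((((d+1)/2 - 1 : ℕ)) : ℝ) = (d:ℝ) - 1 := by
        have h3 : ((2 * ((d+1)/2 - 1) : ℕ) : ℝ) = ((d - 1 : ℕ) : ℝ) := congrArg (Nat.cast (R := ℝ)) h2
        rw [Nat.cast_mul, Nat.cast_sub (show 1 ≤ d by omega)] at h3
        push_cast at h3
        linarith
      simp only [hpar, if_false]
      field_simp
      linarith
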